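/- Let n ≥ 2, α ∈ (0, n+1], and let j ≥ 1 be an integer. Let T_j : ℝ^{n+1} → ℝ^{n+1} be the linear map T_j(ξ'', σ, τ) = (2^j ξ'', σ, 2^{2j} τ) in the coordinates ℝ^{n−1} × ℝ × ℝ. For an α-dimensional measure μ on ℝ^{n+1}, define the measure μ_j by ∫ φ dμ_j = ∫ φ ∘ T_j dμ for continuous compactly supported φ. Then there is a constant C, depending only on n and α, such that for all x₀ ∈ ℝ^{n+1} and ρ > 0, μ_j(B(x₀,ρ)) ≤ C ⟨μ⟩_α min{ 2^{(n+1−2α)j}, 2^{(1−α)j}, 1 } ρ^α; in particular ⟨μ_j⟩_α ≤ C min{ 2^{(n+1−2α)j}, 2^{(1−α)j}, 1 } ⟨μ⟩_α. -/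

import Mathlib

open MeasureTheory Metric Complex Function Set
open scoped ENNReal NNReal Real

noncomputable section

abbrev Ed (d : ℕ) : Type := EuclideanSpace ℝ (Fin d)

/-- Fourier transform `f̂(x) = ∫ e^{-i x·ξ} f(ξ) dξ`. -/
def FT {d : ℕ} (f : Ed d → ℂ) (x : Ed d) : ℂ :=
  ∫ ξ : Ed d, Complex.exp (-(Complex.I * ((inner ℝ x ξ : ℝ) : ℂ))) * f ξ

/-- Truncated light cone `Γ_R ⊆ ℝ^{n+1}`. -/
def cone (n : ℕ) (R : ℝ) : Set (Ed (n+1)) :=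
  {ξ | Real.sqrt (∑ i : Fin n, (ξ i.castSucc)^2) = ξ (Fin.last n) ∧
    R ≤ ξ (Fin.last n) ∧ ξ (Fin.last n) ≤ 2*R}

/-- `δ`-neighborhood `Γ_R(δ)`. -/
def coneN (n : ℕ) (R δ : ℝ) : Set (Ed (n+1)) :=
  {ξ | Metric.infDist ξ (cone n R) < δ}

/-- `⟨μ⟩_α = sup_{x,ρ>0} ρ^{-α} μ(B(x,ρ))`. -/
def fb (d : ℕ) (α : ℝ) (μ : Measure (Ed d)) : ℝ≥0∞ :=
  ⨆ (x : Ed d) (ρ : ℝ) (_ : 0 < ρ), ENNReal.ofReal (ρ ^ (-α)) * μ (Metric.ball x ρ)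

/-- `α`-dimensional measure: compactly supported Borel measure with
`μ(B(x,ρ)) ≤ C ρ^α`. -/
def IsAlphaDim (d : ℕ) (α : ℝ) (μ : Measure (Ed d)) : Prop :=
  (∃ K : Set (Ed d), IsCompact K ∧ μ Kᶜ = 0) ∧ fb d α μ < ⊤

/-- Angular support `𝒜supp f`. -/
def ASupp {d : ℕ} (f : Ed d → ℂ) : Set (Ed d) :=
  (fun ξ => ‖ξ‖⁻¹ • ξ) '' (Function.support f)

/-- Critical exponent `s(α,q,n)`, where `qi = 1/q`. -/
def sCrit (α qi : ℝ) (n : ℕ) : ℝ :=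
  if α ≤ 1 then max ((n:ℝ)/2 - α*qi) (((n:ℝ)+1)/4)
  else if α ≤ (n:ℝ) then
    max ((n:ℝ)/2 - α*qi) (max (((n:ℝ)+1)/4 + (1-α)*qi/2) (((n:ℝ)+2)/4 - α/4))
  else
    max ((n:ℝ)/2 - α*qi) (max (((n:ℝ)+1)/4 + ((n:ℝ)+1-2*α)*qi/2) (((n:ℝ)+1)/2 - α/2))

/-- Inhomogeneous Sobolev norm `‖f‖_{H^s} = ‖(1+|·|²)^{s/2} f̂‖_{L²}`. -/
def sobNorm {n : ℕ} (s : ℝ) (f : Ed n → ℂ) : ℝ≥0∞ :=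
  eLpNorm (fun ξ => (((1 + ‖ξ‖^2) ^ (s/2) : ℝ) : ℂ) * FT f ξ) 2 volume


/-- The anisotropic dilation `T_j(ξ'', σ, τ) = (2^j ξ'', σ, 2^{2j} τ)` on
`ℝ^{n+1} = ℝ^{n-1} × ℝ × ℝ`. -/
def Tdil (n j : ℕ) (x : Ed (n+1)) : Ed (n+1) :=
  WithLp.toLp 2 (fun k : Fin (n+1) => if (k : ℕ) < n - 1 then (2:ℝ)^j * x k
    else if (k : ℕ) = n - 1 then x k
    else (2:ℝ)^(2*j) * x k)

lemma ball_le_fb (d : ℕ) (α : ℝ) (μ : Measure (Ed d)) (x : Ed d) (r : ℝ) (hr : 0 < r) :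
    μ (Metric.ball x r) ≤ ENNReal.ofReal (r ^ α) * fb d α μ := by
  have h1 : ENNReal.ofReal (r ^ (-α)) * μ (Metric.ball x r) ≤ fb d α μ :=
    le_iSup_of_le x (le_iSup_of_le r (le_iSup_of_le hr le_rfl))
  have h2 : μ (Metric.ball x r)
      = ENNReal.ofReal (r ^ α) * (ENNReal.ofReal (r ^ (-α)) * μ (Metric.ball x r)) := by
    rw [← mul_assoc, ← ENNReal.ofReal_mul (Real.rpow_nonneg hr.le α), ← Real.rpow_add hr]
    simp
  rw [h2]
  exact mul_le_mul_right h1 _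

lemma grid_cover (d : ℕ) (hd : 0 < d) (α : ℝ) (μ : Measure (Ed d))
    (y : Ed d) (L : Fin d → ℝ) (r : ℝ) (hr : 0 < r)
    (M : Fin d → ℕ) (hM : ∀ k, L k ≤ r * M k) :
    μ {ξ : Ed d | ∀ k, |ξ k - y k| ≤ L k} ≤
      ((∏ k, (2 * M k + 1) : ℕ) : ℝ≥0∞) *
        (ENNReal.ofReal ((Real.sqrt d * r) ^ α) * fb d α μ) := by
  classical
  set G : Finset (Fin d → ℤ) := Fintype.piFinset (fun k => Finset.Icc (-(M k : ℤ)) (M k)) with hG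
  set c : (Fin d → ℤ) → Ed d := fun m => WithLp.toLp 2 (fun k => y k + r * (m k : ℝ)) with hc
  have hRpos : 0 < Real.sqrt d * r :=
    mul_pos (Real.sqrt_pos.mpr (by exact_mod_cast hd)) hr
  have hcard : G.card = ∏ k, (2 * M k + 1) := by
    rw [hG, Fintype.card_piFinset]
    refine Finset.prod_congr rfl (fun k _ => ?_)
    rw [Int.card_Icc]
    omega
  have hsub : {ξ : Ed d | ∀ k, |ξ k - y k| ≤ L k} ⊆
      ⋃ m ∈ G, Metric.ball (c m) (Real.sqrt d * r) := by
    intro ξ hξ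
    simp only [Set.mem_setOf_eq] at hξ
    set m : Fin d → ℤ := fun k => round ((ξ k - y k) / r) with hm
    have hdist : ∀ k, |ξ k - c m k| ≤ r / 2 := by
      intro k
      have h0 : ξ k - c m k = r * ((ξ k - y k) / r - (m k : ℝ)) := by
        simp only [hc, WithLp.ofLp_toLp]
        field_simp
        ring
      rw [h0, abs_mul, abs_of_pos hr]
      calc r * |(ξ k - y k) / r - (m k : ℝ)|
          ≤ r * (1/2) :=
            mul_le_mul_of_nonneg_left (abs_sub_round ((ξ k - y k) / r)) hr.le
        _ = r / 2 := by ring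
    have hmG : m ∈ G := by
      rw [hG, Fintype.mem_piFinset]
      intro k
      rw [Finset.mem_Icc]
      have h1 : |(ξ k - y k) / r| ≤ (M k : ℝ) := by
        rw [abs_div, abs_of_pos hr, div_le_iff₀ hr]
        calc |ξ k - y k| ≤ L k := hξ k
          _ ≤ r * M k := hM k
          _ = M k * r := mul_comm _ _
      have h3 := abs_le.mp (abs_sub_round ((ξ k - y k) / r))
      have h1' := abs_le.mp h1
      constructor
      · have hr1 : -((M k : ℝ) + 1) < (m k : ℝ) := by
          simp only [hm]
          linarith [h3.1, h3.2, h1'.1, h1'.2]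
        have : -((M k : ℤ) + 1) < m k := by exact_mod_cast hr1
        omega
      · have hr2 : (m k : ℝ) < (M k : ℝ) + 1 := by
          simp only [hm]
          linarith [h3.1, h3.2, h1'.1, h1'.2]
        have : m k < (M k : ℤ) + 1 := by exact_mod_cast hr2
        omega
    refine Set.mem_biUnion hmG ?_
    rw [Metric.mem_ball, EuclideanSpace.dist_eq]
    have hsum : ∑ k, dist (ξ k) (c m k) ^ 2 ≤ (d : ℝ) * (r/2)^2 := by
      calc ∑ k, dist (ξ k) (c m k) ^ 2 ≤ ∑ _k : Fin d, (r/2)^2 := by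
            refine Finset.sum_le_sum (fun k _ => ?_)
            refine pow_le_pow_left₀ dist_nonneg ?_ 2
            rw [Real.dist_eq]
            exact hdist k
        _ = (d : ℝ) * (r/2)^2 := by
            rw [Finset.sum_const, Finset.card_univ, Fintype.card_fin, nsmul_eq_mul]
    calc Real.sqrt (∑ k, dist (ξ k) (c m k) ^ 2)
        ≤ Real.sqrt ((d : ℝ) * (r/2)^2) := Real.sqrt_le_sqrt hsum
      _ = Real.sqrt d * (r/2) := by
          rw [Real.sqrt_mul (by positivity), Real.sqrt_sq (by positivity)]
      _ < Real.sqrt d * r := by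
          have := Real.sqrt_pos.mpr (show (0:ℝ) < d by exact_mod_cast hd)
          nlinarith
  calc μ {ξ : Ed d | ∀ k, |ξ k - y k| ≤ L k}
      ≤ μ (⋃ m ∈ G, Metric.ball (c m) (Real.sqrt d * r)) := measure_mono hsub
    _ ≤ ∑ m ∈ G, μ (Metric.ball (c m) (Real.sqrt d * r)) := measure_biUnion_finset_le G _
    _ ≤ ∑ _m ∈ G, ENNReal.ofReal ((Real.sqrt d * r) ^ α) * fb d α μ :=
        Finset.sum_le_sum fun m _ => ball_le_fb d α μ (c m) _ hRpos
    _ = (G.card : ℝ≥0∞) * (ENNReal.ofReal ((Real.sqrt d * r) ^ α) * fb d α μ) := by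
        rw [Finset.sum_const, nsmul_eq_mul]
    _ = _ := by rw [hcard]

lemma rect_bound (d : ℕ) (hd : 0 < d) (α : ℝ) (μ : Measure (Ed d))
    (y : Ed d) (L : Fin d → ℝ) (r : ℝ) (hr : 0 < r)
    (M : Fin d → ℕ) (hM : ∀ k, L k ≤ r * M k) (N : ℕ) (hN : ∏ k, (2 * M k + 1) ≤ N) :
    μ {ξ : Ed d | ∀ k, |ξ k - y k| ≤ L k} ≤
      ENNReal.ofReal ((N : ℝ) * (Real.sqrt d ^ α * r ^ α)) * fb d α μ := by
  calc μ {ξ : Ed d | ∀ k, |ξ k - y k| ≤ L k}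
      ≤ ((∏ k, (2 * M k + 1) : ℕ) : ℝ≥0∞) *
        (ENNReal.ofReal ((Real.sqrt d * r) ^ α) * fb d α μ) :=
        grid_cover d hd α μ y L r hr M hM
    _ ≤ ((N : ℕ) : ℝ≥0∞) * (ENNReal.ofReal ((Real.sqrt d * r) ^ α) * fb d α μ) := by
        gcongr

    _ = ENNReal.ofReal ((N : ℝ) * (Real.sqrt d ^ α * r ^ α)) * fb d α μ := by
        rw [Real.mul_rpow (Real.sqrt_nonneg _) hr.le, ← ENNReal.ofReal_natCast,
          ← mul_assoc, ← ENNReal.ofReal_mul (by positivity)]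

lemma count_bound (d : ℕ) (e : Fin d → ℕ) :
    ∏ k, (2 * 2 ^ (e k) + 1) ≤ 3 ^ d * 2 ^ (∑ k, e k) := by
  calc ∏ k, (2 * 2 ^ (e k) + 1) ≤ ∏ k, 3 * 2 ^ (e k) := by
        refine Finset.prod_le_prod' (fun k _ => ?_)
        have : 1 ≤ 2 ^ (e k) := Nat.one_le_two_pow
        omega
    _ = 3 ^ d * 2 ^ (∑ k, e k) := by
        rw [Finset.prod_mul_distrib, Finset.prod_const, Finset.card_univ, Fintype.card_fin,
          Finset.prod_pow_eq_pow_sum]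


theorem stmt19 (n : ℕ) (hn : 2 ≤ n) (α : ℝ) (hα0 : 0 < α) (hα : α ≤ (n:ℝ)+1) :
    ∃ C : ℝ, 0 < C ∧
      ∀ j : ℕ, 1 ≤ j →
      ∀ μ : Measure (Ed (n+1)), IsAlphaDim (n+1) α μ →
      ∀ μj : Measure (Ed (n+1)), μj = Measure.map (Tdil n j) μ →
      (∀ x₀ : Ed (n+1), ∀ ρ : ℝ, 0 < ρ →
        μj (Metric.ball x₀ ρ) ≤
          ENNReal.ofReal C * fb (n+1) α μ *
            ENNReal.ofReal
              (min ((2:ℝ) ^ (((n:ℝ)+1-2*α) * (j:ℝ)))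
                (min ((2:ℝ) ^ ((1-α) * (j:ℝ))) 1) * ρ ^ α)) ∧
      fb (n+1) α μj ≤
        ENNReal.ofReal
          (C * min ((2:ℝ) ^ (((n:ℝ)+1-2*α) * (j:ℝ)))
            (min ((2:ℝ) ^ ((1-α) * (j:ℝ))) 1)) * fb (n+1) α μ := by
  obtain ⟨m, rfl⟩ : ∃ m, n = m + 2 := ⟨n - 2, by omega⟩
  set S : ℝ := Real.sqrt ((m+2+1 : ℕ) : ℝ) ^ α with hS
  have hS0 : 0 < S := by
    rw [hS]
    exact Real.rpow_pos_of_pos (Real.sqrt_pos.mpr (by positivity)) α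
  refine ⟨3 ^ (m+2+1) * S, by positivity, ?_⟩
  intro j hj μ _hμ μj hμj
  have hTm : Measurable (Tdil (m+2) j) := by
    unfold Tdil
    refine (WithLp.measurable_toLp 2 _).comp (measurable_pi_lambda _ (fun k => ?_))
    split_ifs
    · exact ((measurable_pi_apply k).comp (WithLp.measurable_ofLp 2 _)).const_mul _
    · exact (measurable_pi_apply k).comp (WithLp.measurable_ofLp 2 _)
    · exact ((measurable_pi_apply k).comp (WithLp.measurable_ofLp 2 _)).const_mul _
  have hmap : ∀ (x₀ : Ed (m+2+1)) (ρ : ℝ),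
      μj (Metric.ball x₀ ρ) = μ (Tdil (m+2) j ⁻¹' Metric.ball x₀ ρ) := by
    intro x₀ ρ
    rw [hμj, Measure.map_apply hTm measurableSet_ball]
  set sc : Fin (m+2+1) → ℝ :=
    fun k => if (k:ℕ) < m+1 then (2:ℝ)^j else if (k:ℕ) = m+1 then 1 else (2:ℝ)^(2*j) with hsc
  have hsc1 : ∀ k, 1 ≤ sc k := by
    intro k
    rw [hsc]
    have h2j : (1:ℝ) ≤ 2^j := one_le_pow₀ one_le_two
    have h2j' : (1:ℝ) ≤ 2^(2*j) := one_le_pow₀ one_le_two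
    dsimp only
    split_ifs <;> linarith
  have hsc_pos : ∀ k, 0 < sc k := fun k => lt_of_lt_of_le one_pos (hsc1 k)
  have hTeq : ∀ (x : Ed (m+2+1)) (k : Fin (m+2+1)), Tdil (m+2) j x k = sc k * x k := by
    intro x k
    simp only [Tdil, hsc, WithLp.ofLp_toLp]
    split_ifs <;> first | ring1 | (exfalso; omega)
  have hpre : ∀ (x₀ : Ed (m+2+1)) (ρ : ℝ),
      Tdil (m+2) j ⁻¹' Metric.ball x₀ ρ ⊆
        {ξ : Ed (m+2+1) | ∀ k, |ξ k - x₀ k / sc k| ≤ ρ / sc k} := by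
    intro x₀ ρ ξ hξ k
    have hdist : dist (Tdil (m+2) j ξ) x₀ < ρ := by
      simpa [Metric.mem_ball] using hξ
    have h1 : |sc k * ξ k - x₀ k| ≤ dist (Tdil (m+2) j ξ) x₀ := by
      rw [EuclideanSpace.dist_eq]
      have h2 : |sc k * ξ k - x₀ k| = Real.sqrt (dist (Tdil (m+2) j ξ k) (x₀ k) ^ 2) := by
        rw [Real.dist_eq, Real.sqrt_sq_eq_abs, hTeq, _root_.abs_abs]
      rw [h2]
      exact Real.sqrt_le_sqrt (Finset.single_le_sum
        (f := fun i => dist (Tdil (m+2) j ξ i) (x₀ i) ^ 2)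
        (fun i _ => sq_nonneg _) (Finset.mem_univ k))
    have key : ξ k - x₀ k / sc k = (sc k * ξ k - x₀ k) / sc k := by
      rw [sub_div, mul_div_cancel_left₀ _ (hsc_pos k).ne']
    rw [key, abs_div, abs_of_pos (hsc_pos k)]
    gcongr
    exact h1.trans hdist.le
  have h1 : ∀ x₀ : Ed (m+2+1), ∀ ρ : ℝ, 0 < ρ →
      μj (Metric.ball x₀ ρ) ≤
        ENNReal.ofReal (3 ^ (m+2+1) * S) * fb (m+2+1) α μ *
          ENNReal.ofReal
            (min ((2:ℝ) ^ ((((m+2:ℕ):ℝ)+1-2*α) * (j:ℝ)))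
              (min ((2:ℝ) ^ ((1-α) * (j:ℝ))) 1) * ρ ^ α) := by
    intro x₀ ρ hρ
    have base : ∀ (r : ℝ), 0 < r → ∀ (M : Fin (m+2+1) → ℕ), (∀ k, ρ / sc k ≤ r * M k) →
        ∀ N : ℕ, (∏ k, (2 * M k + 1)) ≤ N →
        μj (Metric.ball x₀ ρ) ≤
          ENNReal.ofReal ((N:ℝ) * (Real.sqrt ((m+2+1:ℕ):ℝ) ^ α * r ^ α)) * fb (m+2+1) α μ := by
      intro r hr M hM N hN
      rw [hmap]
      exact (measure_mono (hpre x₀ ρ)).trans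
        (rect_bound (m+2+1) (by omega) α μ (WithLp.toLp 2 (fun k => x₀ k / sc k)) (fun k => ρ / sc k)
          r hr M hM N hN)
    have conv : ∀ (q : ℝ), 0 ≤ q → ∀ (N : ℕ) (r : ℝ),
        (N:ℝ) * (S * r ^ α) = (3 ^ (m+2+1) * S) * (q * ρ ^ α) →
        μj (Metric.ball x₀ ρ) ≤
          ENNReal.ofReal ((N:ℝ) * (Real.sqrt ((m+2+1:ℕ):ℝ) ^ α * r ^ α)) * fb (m+2+1) α μ →
        μj (Metric.ball x₀ ρ) ≤
          ENNReal.ofReal (3 ^ (m+2+1) * S) * fb (m+2+1) α μ * ENNReal.ofReal (q * ρ ^ α) := by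
      intro q hq N r heq hb
      refine hb.trans (le_of_eq ?_)
      rw [show Real.sqrt ((m+2+1:ℕ):ℝ) ^ α = S from rfl, heq,
        ENNReal.ofReal_mul (by positivity)]
      ring
    -- bound A : q = 1
    have bndA : μj (Metric.ball x₀ ρ) ≤
        ENNReal.ofReal (3 ^ (m+2+1) * S) * fb (m+2+1) α μ * ENNReal.ofReal (1 * ρ ^ α) := by
      refine conv 1 zero_le_one (3 ^ (m+2+1)) ρ (by push_cast; ring) ?_
      refine base ρ hρ (fun _ => 1) (fun k => ?_) (3 ^ (m+2+1)) ?_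
      · simp only [Nat.cast_one, mul_one]
        exact div_le_self hρ.le (hsc1 k)
      · rw [Finset.prod_const, Finset.card_univ, Fintype.card_fin]
    -- bound B : q = 2^((1-α)j)
    have bndB : μj (Metric.ball x₀ ρ) ≤
        ENNReal.ofReal (3 ^ (m+2+1) * S) * fb (m+2+1) α μ *
          ENNReal.ofReal ((2:ℝ) ^ ((1-α) * (j:ℝ)) * ρ ^ α) := by
      have keyB : ((2:ℝ)^j) * (ρ / 2^j) ^ α = (2:ℝ) ^ ((1-α) * (j:ℝ)) * ρ ^ α := by
        rw [Real.div_rpow hρ.le (by positivity), ← Real.rpow_natCast (2:ℝ) j,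
          ← Real.rpow_mul (by norm_num : (0:ℝ) ≤ 2),
          show (1-α) * (j:ℝ) = (j:ℝ) - (j:ℝ) * α by ring,
          Real.rpow_sub (by norm_num : (0:ℝ) < 2)]
        ring
      refine conv ((2:ℝ) ^ ((1-α) * (j:ℝ))) (by positivity) (3 ^ (m+2+1) * 2^j) (ρ / 2^j)
        ?_ ?_
      · push_cast
        linear_combination (3:ℝ)^(m+2+1) * S * keyB
      · refine base (ρ / 2^j) (by positivity)
          (fun k => if (k:ℕ) = m+1 then 2^j else 1) (fun k => ?_) (3 ^ (m+2+1) * 2^j) ?_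
        · rw [hsc]
          dsimp only
          rcases lt_trichotomy ((k:ℕ)) (m+1) with h|h|h
          · rw [if_pos h, if_neg (show ¬((k:ℕ) = m+1) by omega)]
            simp only [Nat.cast_one, mul_one]
            exact le_refl _
          · rw [if_neg (show ¬((k:ℕ) < m+1) by omega), if_pos h, if_pos h]
            rw [div_one]
            push_cast
            rw [div_mul_cancel₀ _ (by positivity : ((2:ℝ)^j) ≠ 0)]
          · rw [if_neg (show ¬((k:ℕ) < m+1) by omega),
              if_neg (show ¬((k:ℕ) = m+1) by omega),
              if_neg (show ¬((k:ℕ) = m+1) by omega)]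
            simp only [Nat.cast_one, mul_one]
            gcongr
            · exact one_le_two
            · omega
        · have hMe : ∀ k : Fin (m+2+1), ((if (k:ℕ) = m+1 then 2^j else 1) : ℕ)
              = 2 ^ (if (k:ℕ) = m+1 then j else 0) := by
            intro k; split_ifs <;> simp
          calc ∏ k : Fin (m+2+1), (2 * (if (k:ℕ) = m+1 then 2^j else 1) + 1)
              = ∏ k : Fin (m+2+1), (2 * 2 ^ (if (k:ℕ) = m+1 then j else 0) + 1) :=
                Finset.prod_congr rfl (fun k _ => by rw [hMe k])
            _ ≤ 3 ^ (m+2+1) * 2 ^ (∑ k : Fin (m+2+1), if (k:ℕ) = m+1 then j else 0) :=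
                count_bound (m+2+1) _
            _ = 3 ^ (m+2+1) * 2 ^ j := by
                congr 1
                congr 1
                rw [Fin.sum_univ_eq_sum_range (fun i => if i = m+1 then j else 0) (m+2+1)]
                rw [Finset.sum_ite_eq' (Finset.range (m+2+1)) (m+1) (fun _ => j)]
                rw [if_pos (Finset.mem_range.mpr (by omega))]
    -- bound C : q = 2^((n+1-2α)j)
    have bndC : μj (Metric.ball x₀ ρ) ≤
        ENNReal.ofReal (3 ^ (m+2+1) * S) * fb (m+2+1) α μ *
          ENNReal.ofReal ((2:ℝ) ^ ((((m+2:ℕ):ℝ)+1-2*α) * (j:ℝ)) * ρ ^ α) := by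
      have keyC : ((2:ℝ)^((m+2+1)*j)) * (ρ / 2^(2*j)) ^ α
          = (2:ℝ) ^ ((((m+2:ℕ):ℝ)+1-2*α) * (j:ℝ)) * ρ ^ α := by
        rw [Real.div_rpow hρ.le (by positivity), ← Real.rpow_natCast (2:ℝ) ((m+2+1)*j),
          ← Real.rpow_natCast (2:ℝ) (2*j),
          ← Real.rpow_mul (by norm_num : (0:ℝ) ≤ 2),
          show ((((m+2:ℕ):ℝ)+1-2*α) * (j:ℝ)) = (((m+2+1)*j : ℕ):ℝ) - ((2*j : ℕ):ℝ) * α by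
            push_cast; ring,
          Real.rpow_sub (by norm_num : (0:ℝ) < 2)]
        ring
      refine conv ((2:ℝ) ^ ((((m+2:ℕ):ℝ)+1-2*α) * (j:ℝ))) (by positivity)
        (3 ^ (m+2+1) * 2^((m+2+1)*j)) (ρ / 2^(2*j)) ?_ ?_
      · push_cast
        push_cast at keyC
        linear_combination (3:ℝ)^(m+2+1) * S * keyC
      · refine base (ρ / 2^(2*j)) (by positivity)
          (fun k => if (k:ℕ) < m+1 then 2^j else if (k:ℕ) = m+1 then 2^(2*j) else 1)
          (fun k => ?_) (3 ^ (m+2+1) * 2^((m+2+1)*j)) ?_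
        · rw [hsc]
          dsimp only
          rcases lt_trichotomy ((k:ℕ)) (m+1) with h|h|h
          · rw [if_pos h, if_pos h]
            push_cast
            apply le_of_eq
            rw [two_mul, pow_add]
            field_simp
          · rw [if_neg (show ¬((k:ℕ) < m+1) by omega),
              if_neg (show ¬((k:ℕ) < m+1) by omega), if_pos h, if_pos h]
            rw [div_one]
            push_cast
            rw [div_mul_cancel₀ _ (by positivity : ((2:ℝ)^(2*j)) ≠ 0)]
          · rw [if_neg (show ¬((k:ℕ) < m+1) by omega),
              if_neg (show ¬((k:ℕ) < m+1) by omega),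
              if_neg (show ¬((k:ℕ) = m+1) by omega),
              if_neg (show ¬((k:ℕ) = m+1) by omega)]
            simp only [Nat.cast_one, mul_one]
            exact le_refl _
        · have hMe : ∀ k : Fin (m+2+1),
              ((if (k:ℕ) < m+1 then 2^j else if (k:ℕ) = m+1 then 2^(2*j) else 1) : ℕ)
              = 2 ^ (if (k:ℕ) < m+1 then j else if (k:ℕ) = m+1 then 2*j else 0) := by
            intro k; split_ifs <;> simp
          calc ∏ k : Fin (m+2+1),
                (2 * (if (k:ℕ) < m+1 then 2^j else if (k:ℕ) = m+1 then 2^(2*j) else 1) + 1)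
              = ∏ k : Fin (m+2+1),
                (2 * 2 ^ (if (k:ℕ) < m+1 then j else if (k:ℕ) = m+1 then 2*j else 0) + 1) :=
                Finset.prod_congr rfl (fun k _ => by rw [hMe k])
            _ ≤ 3 ^ (m+2+1) * 2 ^ (∑ k : Fin (m+2+1),
                  if (k:ℕ) < m+1 then j else if (k:ℕ) = m+1 then 2*j else 0) :=
                count_bound (m+2+1) _
            _ = 3 ^ (m+2+1) * 2 ^ ((m+2+1)*j) := by
                congr 1
                congr 1
                rw [Fin.sum_univ_eq_sum_range
                  (fun i => if i < m+1 then j else if i = m+1 then 2*j else 0) (m+2+1)]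
                rw [Finset.sum_range_succ]
                rw [show m+2 = (m+1)+1 from rfl, Finset.sum_range_succ]
                rw [if_neg (show ¬(m+1+1 < m+1) by omega),
                  if_neg (show ¬(m+1+1 = m+1) by omega),
                  if_neg (show ¬(m+1 < m+1) by omega), if_pos rfl]
                have hcst : ∑ i ∈ Finset.range (m+1),
                    (if i < m+1 then j else if i = m+1 then 2*j else 0)
                    = ∑ _i ∈ Finset.range (m+1), j :=
                  Finset.sum_congr rfl (fun i hi => by
                    rw [if_pos (Finset.mem_range.mp hi)])
                rw [hcst, Finset.sum_const, Finset.card_range, smul_eq_mul]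
                ring
    rcases min_cases ((2:ℝ) ^ ((((m+2:ℕ):ℝ)+1-2*α) * (j:ℝ)))
        (min ((2:ℝ) ^ ((1-α) * (j:ℝ))) 1) with ⟨hmin, _⟩ | ⟨hmin, _⟩
    · rw [hmin]; exact bndC
    · rw [hmin]
      rcases min_cases ((2:ℝ) ^ ((1-α) * (j:ℝ))) 1 with ⟨hmin2, _⟩ | ⟨hmin2, _⟩
      · rw [hmin2]; exact bndB
      · rw [hmin2]; exact bndA
  refine ⟨h1, ?_⟩
  have hC0 : (0:ℝ) ≤ 3 ^ (m+2+1) * S := by positivity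
  set Q : ℝ := min ((2:ℝ) ^ ((((m+2:ℕ):ℝ)+1-2*α) * (j:ℝ)))
      (min ((2:ℝ) ^ ((1-α) * (j:ℝ))) 1) with hQ
  simp only [fb]
  refine iSup_le fun x => iSup_le fun ρ => iSup_le fun hρ => ?_
  have hrw : ρ ^ (-α) * ((3 ^ (m+2+1) * S) * (Q * ρ ^ α)) = (3 ^ (m+2+1) * S) * Q := by
    have hone : ρ ^ (-α) * ρ ^ α = 1 := by
      rw [← Real.rpow_add hρ]; simp
    linear_combination (3 ^ (m+2+1) * S) * Q * hone
  calc ENNReal.ofReal (ρ ^ (-α)) * μj (Metric.ball x ρ)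
      ≤ ENNReal.ofReal (ρ ^ (-α)) *
        (ENNReal.ofReal (3 ^ (m+2+1) * S) * fb (m+2+1) α μ * ENNReal.ofReal (Q * ρ ^ α)) :=
        mul_le_mul_right (h1 x ρ hρ) _
    _ = ENNReal.ofReal (ρ ^ (-α) * ((3 ^ (m+2+1) * S) * (Q * ρ ^ α))) * fb (m+2+1) α μ := by
        rw [ENNReal.ofReal_mul (Real.rpow_nonneg hρ.le _), ENNReal.ofReal_mul hC0]
        ring
    _ = ENNReal.ofReal ((3 ^ (m+2+1) * S) * Q) * fb (m+2+1) α μ := by rw [hrw]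

end
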